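/- Every automorphism of the Fermat curve X⁷ + Y⁷ + Z⁷ = 0 is of the form a permutation of coordinates composed with diag(1, ζ₇ᵃ, ζ₇ᵇ), and none of these 6·49 = 294 automorphisms has order 6. -/

import Mathlib

open Matrix

open Polynomial in
lemma aux_deg {k : Type*} [Field k] (a b : k) :
    ((C a + C b * X)^7 - C (b^7) * X^7).natDegree ≤ 6 := by
  have h : (C a + C b * X)^7 - C (b^7) * X^7
      = ∑ t ∈ Finset.range 7, C (a ^ (t+1) * b ^ (6 - t) * (Nat.choose 7 (t+1))) * X ^ (6 - t) := by
    rw [add_pow]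
    rw [Finset.sum_range_succ' (fun t => C a ^ t * (C b * X) ^ (7 - t) * (Nat.choose 7 t : k[X])) 7]
    simp only [pow_zero, Nat.sub_zero, Nat.choose_zero_right, Nat.cast_one, mul_one, one_mul]
    rw [mul_pow, C_pow, add_sub_cancel_right]
    refine Finset.sum_congr rfl fun t ht => ?_
    simp only [Finset.mem_range] at ht
    rw [mul_pow, ← C_pow, ← C_pow]
    have h7 : 7 - (t+1) = 6 - t := by omega
    rw [h7]
    simp only [C_mul, C_pow, mul_pow, ← Polynomial.C_eq_natCast]
    ring
  rw [h]
  refine Polynomial.natDegree_sum_le_of_forall_le _ _ fun t ht => ?_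
  exact (Polynomial.natDegree_C_mul_X_pow_le _ _).trans (by omega)

open Polynomial in
lemma seven_roots {k : Type*} [Field k] {ζ : k} (hζ : IsPrimitiveRoot ζ 7)
    (a b : Fin 3 → k) (lam s z₀ : k) (hlam : ∑ i, b i ^ 7 = lam)
    (hz₀ : z₀ ≠ 0) (hz7 : z₀ ^ 7 = -s)
    (hroots : ∀ t : ℕ, ∑ i, (a i + b i * (z₀ * ζ ^ t)) ^ 7 = 0) :
    ∀ z : k, ∑ i, (a i + b i * z) ^ 7 = lam * (z ^ 7 + s) := by
  intro z
  set q : k[X] := (∑ i, (C (a i) + C (b i) * X) ^ 7) - C lam * (X ^ 7 + C s) with hq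
  have heval : ∀ w : k, q.eval w = (∑ i, (a i + b i * w) ^ 7) - lam * (w ^ 7 + s) := by
    intro w; simp [hq, Polynomial.eval_finset_sum]
  have hq0 : q = 0 := by
    apply Polynomial.eq_zero_of_natDegree_lt_card_of_eval_eq_zero q
      (f := fun t : Fin 7 => z₀ * ζ ^ (t : ℕ))
    · intro t₁ t₂ h
      have := mul_left_cancel₀ hz₀ h
      exact Fin.ext (hζ.pow_inj t₁.isLt t₂.isLt this)
    · intro t
      rw [heval]
      have h7 : (z₀ * ζ ^ (t : ℕ)) ^ 7 = -s := by
        rw [mul_pow, ← pow_mul, mul_comm (t:ℕ) 7, pow_mul, hζ.pow_eq_one, one_pow, mul_one, hz7]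
      rw [hroots, h7]
      ring
    · have : q = (∑ i, ((C (a i) + C (b i) * X) ^ 7 - C (b i ^ 7) * X ^ 7)) - C (lam * s) := by
        rw [hq, Finset.sum_sub_distrib, ← Finset.sum_mul, sub_sub]
        congr 1
        have hs : (∑ i : Fin 3, C (b i ^ 7) : k[X]) = C lam := by rw [← hlam]; simp
        rw [hs, C_mul]
        ring
      rw [this]
      have h1 : (∑ i : Fin 3, ((C (a i) + C (b i) * X) ^ 7 - C (b i ^ 7) * X ^ 7)).natDegree ≤ 6 :=
        Polynomial.natDegree_sum_le_of_forall_le _ _ fun i _ => aux_deg (a i) (b i)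
      calc ((∑ i : Fin 3, ((C (a i) + C (b i) * X) ^ 7 - C (b i ^ 7) * X ^ 7)) - C (lam*s)).natDegree
          ≤ max _ (C (lam*s)).natDegree := Polynomial.natDegree_sub_le _ _
        _ < 7 := by
            apply max_lt (lt_of_le_of_lt h1 (by norm_num))
            rw [Polynomial.natDegree_C]; norm_num
  have h := heval z
  rw [hq0, Polynomial.eval_zero] at h
  exact sub_eq_zero.mp h.symm

open Polynomial in
lemma func_id {k : Type*} [Field k] [IsAlgClosed k] {ζ : k} (hζ : IsPrimitiveRoot ζ 7)
    (M : Matrix (Fin 3) (Fin 3) k)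
    (hpres : ∀ v : Fin 3 → k, (∑ i, v i ^ 7) = 0 → (∑ i, (M.mulVec v) i ^ 7) = 0) :
    ∀ v : Fin 3 → k, (∑ i, (M.mulVec v) i ^ 7) = (∑ i, M i 2 ^ 7) * ∑ j, v j ^ 7 := by
  set lam := ∑ i, M i 2 ^ 7 with hlam
  have stage1 : ∀ x y z : k, x ^ 7 + y ^ 7 ≠ 0 →
      ∑ i, (M i 0 * x + M i 1 * y + M i 2 * z) ^ 7 = lam * (x ^ 7 + y ^ 7 + z ^ 7) := by
    intro x y z hs
    obtain ⟨z₀, hz₀⟩ := IsAlgClosed.exists_pow_nat_eq (-(x ^ 7 + y ^ 7)) (n := 7) (by norm_num)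
    have hz₀ne : z₀ ≠ 0 := by
      intro h; rw [h] at hz₀; simp at hz₀
      exact hs (by linear_combination hz₀)
    have key := seven_roots hζ (fun i => M i 0 * x + M i 1 * y) (fun i => M i 2)
      lam (x ^ 7 + y ^ 7) z₀ rfl hz₀ne hz₀ ?_ z
    · rw [key]; ring
    · intro t
      have hv : (∑ i, (![x, y, z₀ * ζ ^ t] : Fin 3 → k) i ^ 7) = 0 := by
        simp [Fin.sum_univ_three]
        rw [mul_pow, ← pow_mul, mul_comm t 7, pow_mul, hζ.pow_eq_one, one_pow, mul_one, hz₀]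
        ring
      have := hpres _ hv
      calc ∑ i, (M i 0 * x + M i 1 * y + M i 2 * (z₀ * ζ ^ t)) ^ 7
          = ∑ i, (M.mulVec ![x, y, z₀ * ζ ^ t]) i ^ 7 := by
            refine Finset.sum_congr rfl fun i _ => ?_
            simp [Matrix.mulVec, dotProduct, Fin.sum_univ_three]
        _ = 0 := this
  have stage2 : ∀ x y z : k,
      ∑ i, (M i 0 * x + M i 1 * y + M i 2 * z) ^ 7 = lam * (x ^ 7 + y ^ 7 + z ^ 7) := by
    intro x y z
    set r : k[X] := (∑ i, (C (M i 1 * y + M i 2 * z) + C (M i 0) * X) ^ 7)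
      - C lam * (X ^ 7 + C (y ^ 7 + z ^ 7)) with hr
    have hreval : ∀ w : k, r.eval w =
        (∑ i, (M i 0 * w + M i 1 * y + M i 2 * z) ^ 7) - lam * (w ^ 7 + y ^ 7 + z ^ 7) := by
      intro w
      rw [hr]
      simp only [Polynomial.eval_sub, Polynomial.eval_mul, Polynomial.eval_add,
        Polynomial.eval_pow, Polynomial.eval_C, Polynomial.eval_X, Polynomial.eval_finset_sum]
      have he : ∀ i : Fin 3, (M i 1 * y + M i 2 * z + M i 0 * w) ^ 7
          = (M i 0 * w + M i 1 * y + M i 2 * z) ^ 7 := fun i => by ring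
      simp only [he]
      ring
    have hne7 : (X ^ 7 + C (y ^ 7) : k[X]) ≠ 0 :=
      (Polynomial.monic_X_pow_add_C (y ^ 7) (by norm_num)).ne_zero
    have hfin : {x : k | x ^ 7 + y ^ 7 = 0}.Finite := by
      rw [show {x : k | x ^ 7 + y ^ 7 = 0} = {w : k | (X ^ 7 + C (y ^ 7) : k[X]).IsRoot w} from by
        ext w; simp [Polynomial.IsRoot]]
      rw [← Set.not_infinite]
      intro h
      exact hne7 (Polynomial.eq_zero_of_infinite_isRoot _ h)
    have hsub : {x : k | x ^ 7 + y ^ 7 = 0}ᶜ ⊆ {w : k | r.IsRoot w} := by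
      intro w hw
      have hst := stage1 w y z hw
      show r.eval w = 0
      rw [hreval w, hst]
      ring
    have hr0 : r = 0 :=
      Polynomial.eq_zero_of_infinite_isRoot _ ((hfin.infinite_compl).mono hsub)
    have := hreval x
    rw [hr0, Polynomial.eval_zero] at this
    exact sub_eq_zero.mp this.symm
  intro v
  have := stage2 (v 0) (v 1) (v 2)
  calc ∑ i, (M.mulVec v) i ^ 7
      = ∑ i, (M i 0 * v 0 + M i 1 * v 1 + M i 2 * v 2) ^ 7 := by
        refine Finset.sum_congr rfl fun i _ => ?_
        simp [Matrix.mulVec, dotProduct, Fin.sum_univ_three]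
    _ = lam * (v 0 ^ 7 + v 1 ^ 7 + v 2 ^ 7) := this
    _ = lam * ∑ j, v j ^ 7 := by rw [Fin.sum_univ_three]

open MvPolynomial in
lemma hess {k : Type*} [Field k] [IsAlgClosed k] (h42 : (42 : k) ≠ 0)
    (M : Matrix (Fin 3) (Fin 3) k) (lam : k)
    (hid : ∀ v : Fin 3 → k, (∑ i, (M.mulVec v) i ^ 7) = lam * ∑ j, v j ^ 7) :
    ∀ (v : Fin 3 → k) (a b : Fin 3),
      (∑ i, (M.mulVec v) i ^ 5 * (M i a * M i b)) = lam * (if a = b then v b ^ 5 else 0) := by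
  classical
  set L : Fin 3 → MvPolynomial (Fin 3) k := fun i => ∑ j, C (M i j) * X j with hL
  set P : MvPolynomial (Fin 3) k := (∑ i, L i ^ 7) - C lam * ∑ j, X j ^ 7 with hPdef
  have hevalL : ∀ (v : Fin 3 → k) (i : Fin 3), eval v (L i) = M.mulVec v i := by
    intro v i
    simp [hL, Matrix.mulVec, dotProduct]
  have hP : P = 0 := by
    apply MvPolynomial.funext
    intro v
    simp only [hPdef, _root_.map_sub, _root_.map_mul, _root_.map_sum, _root_.map_pow, eval_C, eval_X, hevalL, _root_.map_zero]
    rw [sub_eq_zero]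
    exact hid v
  have hdL : ∀ (i : Fin 3) (b : Fin 3), pderiv b (L i) = C (M i b) := by
    intro i b
    simp [hL, pderiv_X, Pi.single_apply]
  intro v a b
  have h0 := congrArg (eval v) (congrArg (pderiv a) (congrArg (pderiv b) hP))
  simp only [hPdef, _root_.map_sub, _root_.map_sum, pderiv_pow, hdL, pderiv_C_mul, pderiv_X,
    _root_.map_mul, _root_.map_pow, Derivation.leibniz, Pi.single_apply, _root_.map_zero, smul_eq_mul,
    pderiv_C, eval_C, eval_X, hevalL, _root_.map_add, _root_.map_natCast, apply_ite (eval v), apply_ite (pderiv a), _root_.map_one, Derivation.map_natCast,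
    mul_zero, zero_mul, add_zero, zero_add, mul_ite, ite_mul, mul_one, one_mul,
    Finset.sum_ite_eq, Finset.sum_ite_eq', Finset.mem_univ, if_true] at h0
  push_cast at h0
  have hs : (∑ x : Fin 3, M x b * (7 * (6 * M.mulVec v x ^ 5 * M x a)))
      = 42 * ∑ i, M.mulVec v i ^ 5 * (M i a * M i b) := by
    rw [Finset.mul_sum]; exact Finset.sum_congr rfl fun i _ => by ring
  rw [hs] at h0
  rcases eq_or_ne a b with rfl | hab
  · rw [if_pos rfl] at h0
    rw [if_pos rfl]
    apply mul_left_cancel₀ h42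
    linear_combination h0
  · rw [if_neg (Ne.symm hab)] at h0
    rw [if_neg hab]
    apply mul_left_cancel₀ h42
    linear_combination h0

open Matrix in
lemma det_id {k : Type*} [Field k] (M : Matrix (Fin 3) (Fin 3) k) (lam : k)
    (hhess : ∀ (v : Fin 3 → k) (a b : Fin 3),
      (∑ i, (M.mulVec v) i ^ 5 * (M i a * M i b)) = lam * (if a = b then v b ^ 5 else 0)) :
    ∀ v : Fin 3 → k, M.det ^ 2 * ∏ i, (M.mulVec v) i ^ 5 = lam ^ 3 * ∏ j, v j ^ 5 := by
  intro v
  have hA : M.transpose * (Matrix.diagonal (fun i => (M.mulVec v) i ^ 5) * M)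
      = lam • Matrix.diagonal (fun j => v j ^ 5) := by
    ext a b
    rw [Matrix.mul_apply]
    simp only [Matrix.diagonal_mul, Matrix.transpose_apply, Matrix.smul_apply,
      Matrix.diagonal_apply, smul_eq_mul]
    have := hhess v a b
    calc ∑ i, M i a * ((M.mulVec v) i ^ 5 * M i b)
        = ∑ i, (M.mulVec v) i ^ 5 * (M i a * M i b) := Finset.sum_congr rfl fun i _ => by ring
      _ = lam * (if a = b then v b ^ 5 else 0) := this
      _ = lam * (if a = b then v a ^ 5 else 0) := by
          rcases eq_or_ne a b with rfl | h; · rfl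
          · rw [if_neg h, if_neg h]
      _ = (lam * if a = b then v a ^ 5 else 0) := by
          rcases eq_or_ne a b with rfl | h <;> simp
  have hdet := congrArg Matrix.det hA
  rw [Matrix.det_mul, Matrix.det_mul, Matrix.det_transpose, Matrix.det_diagonal,
    Matrix.det_smul, Matrix.det_diagonal, Fintype.card_fin] at hdet
  calc M.det ^ 2 * ∏ i, (M.mulVec v) i ^ 5
      = M.det * ((∏ i, (M.mulVec v) i ^ 5) * M.det) := by ring
    _ = lam ^ 3 * ∏ j, v j ^ 5 := hdet

open Polynomial in
lemma monomial_rows {k : Type*} [Field k] [IsAlgClosed k]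
    (M : Matrix (Fin 3) (Fin 3) k) (lam : k) (hdet : M.det ≠ 0)
    (hprod : ∀ v : Fin 3 → k, M.det ^ 2 * ∏ i, (M.mulVec v) i ^ 5 = lam ^ 3 * ∏ j, v j ^ 5) :
    ∀ j : Fin 3, ∃ i : Fin 3, ∀ j' : Fin 3, j' ≠ j → M i j' = 0 := by
  have hfin' : ∀ j j' : Fin 3, j' ≠ j → (j' = j + 1 ∨ j' = j + 2) := by decide
  have hj1' : ∀ j : Fin 3, j ≠ j + 1 := by decide
  have hj2' : ∀ j : Fin 3, j ≠ j + 2 := by decide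
  intro j
  have hfin := hfin' j
  have hj1 := hj1' j
  have hj2 := hj2' j
  have hvec : ∀ t : k, ∀ i : Fin 3,
      M.mulVec ((Pi.single (j+1) 1 : Fin 3 → k) + t • (Pi.single (j+2) 1 : Fin 3 → k)) i
        = M i (j+1) + M i (j+2) * t := by
    intro t i
    rw [Matrix.mulVec_add, Matrix.mulVec_smul]
    simp [Matrix.mulVec_single, mul_comm]
  have hzero : ∀ t : k, ∏ i, (M i (j+1) + M i (j+2) * t) = 0 := by
    intro t
    set v : Fin 3 → k := (Pi.single (j+1) 1 : Fin 3 → k) + t • (Pi.single (j+2) 1 : Fin 3 → k) with hv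
    have hvj : v j = 0 := by
      simp [hv, Pi.single_apply, if_neg (Ne.symm hj1), if_neg (Ne.symm hj2),
        (Ne.symm hj1 : ¬ (j+1 = j)), (Ne.symm hj2 : ¬ (j+2 = j))]
    have h5 : M.det ^ 2 * ∏ i, (M.mulVec v) i ^ 5 = 0 := by
      rw [hprod v]
      rw [Finset.prod_eq_zero (Finset.mem_univ j) (by rw [hvj]; norm_num), mul_zero]
    have h6 : ∏ i, (M.mulVec v) i ^ 5 = 0 := by
      rcases mul_eq_zero.mp h5 with h | h
      · exact absurd (pow_eq_zero_iff (by norm_num) |>.mp h) hdet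
      · exact h
    rw [Finset.prod_pow] at h6
    have := pow_eq_zero_iff (n := 5) (by norm_num) |>.mp h6
    rw [← this]
    exact Finset.prod_congr rfl fun i _ => (hvec t i).symm
  have hpoly : (∏ i, (C (M i (j+1)) + C (M i (j+2)) * X) : k[X]) = 0 := by
    apply Polynomial.zero_of_eval_zero
    intro t
    rw [Polynomial.eval_prod]
    simpa using hzero t
  obtain ⟨i, -, hi⟩ := Finset.prod_eq_zero_iff.mp hpoly
  refine ⟨i, fun j' hj' => ?_⟩
  have ha : M i (j+1) = 0 := by
    have := congrArg (Polynomial.eval 0) hi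
    simpa using this
  have hb : M i (j+2) = 0 := by
    rw [ha, map_zero, zero_add] at hi
    rcases mul_eq_zero.mp hi with h | h
    · exact (Polynomial.C_eq_zero).mp h
    · exact absurd h Polynomial.X_ne_zero
  rcases hfin j' hj' with rfl | rfl
  · exact ha
  · exact hb

lemma monomial_struct {k : Type*} [Field k] (M : Matrix (Fin 3) (Fin 3) k)
    (hdet : M.det ≠ 0)
    (hrows : ∀ j : Fin 3, ∃ i : Fin 3, ∀ j' : Fin 3, j' ≠ j → M i j' = 0) :
    ∃ (σ : Equiv.Perm (Fin 3)) (e : Fin 3 → k),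
      ∀ i j, M i j = if σ j = i then e j else 0 := by
  choose φ hφ using hrows
  have hinj : Function.Injective φ := by
    intro j1 j2 h
    by_contra hne
    apply hdet
    apply Matrix.det_eq_zero_of_row_eq_zero (φ j1)
    intro c
    rcases eq_or_ne c j1 with rfl | h1
    · rw [h]; exact hφ j2 c (fun hc => hne (hc ▸ rfl))
    · exact hφ j1 c h1
  have hbij := Finite.injective_iff_bijective.mp hinj
  refine ⟨Equiv.ofBijective φ hbij, fun j => M (φ j) j, ?_⟩
  intro i j
  rcases eq_or_ne (Equiv.ofBijective φ hbij j) i with h | h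
  · rw [if_pos h]
    have h2 : φ j = i := h
    rw [← h2]
  · rw [if_neg h]
    obtain ⟨j2, hj2⟩ := hbij.surjective i
    have hne : j ≠ j2 := by
      intro hh
      exact h (by rw [hh]; exact hj2)
    rw [← hj2]
    exact hφ j2 j hne

lemma pmul {k : Type*} [Field k] (σ τ : Equiv.Perm (Fin 3)) (e f : Fin 3 → k) :
    (Matrix.of fun i j => if σ j = i then e j else 0) *
      (Matrix.of fun i j => if τ j = i then f j else 0)
    = Matrix.of fun i j => if (σ * τ) j = i then e (τ j) * f j else 0 := by
  ext i j
  rw [Matrix.mul_apply]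
  simp only [Matrix.of_apply, Equiv.Perm.mul_apply]
  rw [Finset.sum_eq_single (τ j)]
  · rw [if_pos rfl]
    rcases eq_or_ne (σ (τ j)) i with h | h
    · rw [if_pos h]; exact (if_pos h).symm
    · rw [if_neg h, zero_mul]; exact (if_neg h).symm
  · intro l _ hl
    rw [if_neg (show ¬ τ j = l from fun hh => hl hh.symm), mul_zero]
  · intro h
    exact absurd (Finset.mem_univ _) h


/-- Every automorphism of the Fermat septic `X⁷ + Y⁷ + Z⁷ = 0` is (up to scalar) a permutation
of the coordinates composed with `diag(1, ζ₇ᵃ, ζ₇ᵇ)`, and none of these `294` automorphisms has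
order `6` (in `PGL₃`: if its 6th power is scalar, then already its square or cube is scalar). -/
theorem fermat_septic_automorphisms {k : Type*} [Field k] [IsAlgClosed k]
    (hchar : ∀ p : ℕ, CharP k p → p = 0 ∨ 31 < p)
    (ζ : k) (hζ : IsPrimitiveRoot ζ 7) :
    ∀ M : Matrix (Fin 3) (Fin 3) k, IsUnit M →
      (∀ v : Fin 3 → k, (∑ i, v i ^ 7) = 0 → (∑ i, (M.mulVec v) i ^ 7) = 0) →
      ((∃ (σ : Equiv.Perm (Fin 3)) (a b : ℕ) (c : k), c ≠ 0 ∧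
          c • M = Matrix.of
            (fun i j => if σ j = i then (![1, ζ ^ a, ζ ^ b] : Fin 3 → k) j else 0)) ∧
        ((∃ c : k, c ≠ 0 ∧ M ^ 6 = c • (1 : Matrix (Fin 3) (Fin 3) k)) →
          (∃ c : k, c ≠ 0 ∧ M ^ 2 = c • (1 : Matrix (Fin 3) (Fin 3) k)) ∨
          (∃ c : k, c ≠ 0 ∧ M ^ 3 = c • (1 : Matrix (Fin 3) (Fin 3) k)))) := by
  intro M hM hpres
  have hdetu : IsUnit M.det := (Matrix.isUnit_iff_isUnit_det M).mp hM
  have hdet : M.det ≠ 0 := hdetu.ne_zero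
  -- characteristic: 42 ≠ 0
  have h42 : (42 : k) ≠ 0 := by
    intro h
    have hc : CharP k (ringChar k) := ringChar.charP k
    have hdvd : ringChar k ∣ 42 := by
      have : ((42 : ℕ) : k) = 0 := by exact_mod_cast h
      exact (CharP.cast_eq_zero_iff k (ringChar k) 42).mp this
    rcases hchar (ringChar k) hc with h0 | h31
    · rw [h0] at hdvd; norm_num at hdvd
    · rcases CharP.char_is_prime_or_zero k (ringChar k) with hp | hp
      · have hle : ringChar k ≤ 42 := Nat.le_of_dvd (by norm_num) hdvd
        interval_cases (ringChar k) <;> first | exact absurd hp (by decide) | norm_num at hdvd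
      · rw [hp] at h31; omega
  set lam := ∑ i, M i 2 ^ 7 with hlamdef
  have hid : ∀ v : Fin 3 → k, (∑ i, (M.mulVec v) i ^ 7) = lam * ∑ j, v j ^ 7 :=
    func_id hζ M hpres
  have hlam0 : lam ≠ 0 := by
    intro h0
    have h := hid (M⁻¹.mulVec (Pi.single 0 1 : Fin 3 → k))
    rw [Matrix.mulVec_mulVec, Matrix.mul_nonsing_inv M hdetu, Matrix.one_mulVec, h0,
      zero_mul] at h
    have : ∑ i, (Pi.single (0 : Fin 3) (1:k)) i ^ 7 = (1 : k) := by
      simp [Pi.single_apply, apply_ite (fun x : k => x ^ 7), Finset.sum_ite_eq']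
    rw [this] at h
    exact one_ne_zero h
  have hhess := hess h42 M lam hid
  have hprod := det_id M lam hhess
  have hrows := monomial_rows M lam hdet hprod
  obtain ⟨σ, e, hMe⟩ := monomial_struct M hdet hrows
  have hMof : M = Matrix.of fun i j => if σ j = i then e j else 0 := by
    ext i j; exact hMe i j
  have he7 : ∀ j, e j ^ 7 = lam := by
    intro j
    have h := hid (Pi.single j 1 : Fin 3 → k)
    have h1 : M.mulVec (Pi.single j 1 : Fin 3 → k) = fun i => M i j := by
      funext i; simp [Matrix.mulVec_single]
    have h3 : ∑ m, (Pi.single j (1:k)) m ^ 7 = (1 : k) := by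
      simp [Pi.single_apply, apply_ite (fun x : k => x ^ 7), Finset.sum_ite_eq']
    rw [h1, h3, mul_one] at h
    have h2 : ∑ i, (M i j) ^ 7 = e j ^ 7 := by
      simp only [hMe, apply_ite (fun x : k => x ^ 7)]
      simp [Finset.sum_ite_eq]
    rw [← h2, h]
  have he0 : ∀ j, e j ≠ 0 := fun j h0 => hlam0 (by rw [← he7 j, h0]; norm_num)
  constructor
  · -- Part 1
    have hpow : ∀ j : Fin 3, (e j * (e 0)⁻¹) ^ 7 = 1 := by
      intro j
      rw [mul_pow, inv_pow, he7, he7, mul_inv_cancel₀ hlam0]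
    obtain ⟨a, -, ha⟩ := hζ.eq_pow_of_pow_eq_one (hpow 1)
    obtain ⟨b, -, hb⟩ := hζ.eq_pow_of_pow_eq_one (hpow 2)
    refine ⟨σ, a, b, (e 0)⁻¹, inv_ne_zero (he0 0), ?_⟩
    ext i j
    simp only [Matrix.smul_apply, Matrix.of_apply, smul_eq_mul]
    rw [hMe i j]
    rcases eq_or_ne (σ j) i with h | h
    · rw [if_pos h, if_pos h]
      fin_cases j
      · simpa using inv_mul_cancel₀ (he0 0)
      · simpa using (mul_comm _ _).trans ha.symm
      · simpa using (mul_comm _ _).trans hb.symm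
    · rw [if_neg h, if_neg h, mul_zero]
  · -- Part 2
    rintro ⟨c6, hc6, h6⟩
    have hM2 : M ^ 2 = Matrix.of fun i j => if (σ * σ) j = i then e (σ j) * e j else 0 := by
      rw [pow_two, hMof]; exact pmul σ σ e e
    have hperm : ∀ τ : Equiv.Perm (Fin 3),
        τ ^ 2 = 1 ∨ τ = finRotate 3 ∨ τ = (finRotate 3)⁻¹ := by decide
    rcases hperm σ with h | h
    · -- σ² = 1 : M² is diagonal, show M² scalar
      left
      have hσ2 : σ * σ = 1 := by rw [← pow_two]; exact h
      rw [hσ2] at hM2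
      set u : Fin 3 → k := fun j => e (σ j) * e j with hu
      have hM2' : M ^ 2 = Matrix.of fun i j => if j = i then u j else 0 := by
        rw [hM2]; rfl
      have hM6 : M ^ 6 = Matrix.of fun i j => if j = i then u j * u j * u j else 0 := by
        have h62 : M ^ 6 = M ^ 2 * M ^ 2 * M ^ 2 := by
          rw [← pow_add, ← pow_add]
        rw [h62, hM2']
        have e1 : (Matrix.of fun i j => if j = i then u j else 0)
            = Matrix.of fun i j => if (1 : Equiv.Perm (Fin 3)) j = i then u j else 0 := rfl
        rw [e1, pmul, pmul]
        ext i j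
        simp only [Matrix.of_apply, Equiv.Perm.one_apply, Equiv.Perm.mul_apply, one_mul,
          mul_assoc]
      have hu3 : ∀ j, u j * u j * u j = c6 := by
        intro j
        have := congrArg (fun A => A j j) (hM6.symm.trans h6)
        simpa using this
      have hu7 : ∀ j, u j ^ 7 = lam ^ 2 := by
        intro j; simp only [hu]; rw [mul_pow, he7, he7]; ring
      have huc : ∀ j, u j * c6 ^ 2 = lam ^ 2 := by
        intro j
        calc u j * c6 ^ 2 = u j * ((u j * u j * u j) * (u j * u j * u j)) := by
              rw [hu3 j]; ring
          _ = u j ^ 7 := by ring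
          _ = lam ^ 2 := hu7 j
      have hueq : ∀ j, u j = u 0 := by
        intro j
        have := (huc j).trans (huc 0).symm
        exact mul_right_cancel₀ (pow_ne_zero 2 hc6) this
      refine ⟨u 0, mul_ne_zero (he0 (σ 0)) (he0 0), ?_⟩
      rw [hM2']
      ext i j
      simp only [Matrix.of_apply, Matrix.smul_apply, Matrix.one_apply, smul_eq_mul]
      rcases eq_or_ne j i with h' | h'
      · rw [if_pos h', if_pos h'.symm, hueq j, mul_one]
      · rw [if_neg h', if_neg (Ne.symm h'), mul_zero]
    · -- σ is a 3-cycle : M³ is scalar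
      right
      have hM3 : M ^ 3 = Matrix.of fun i j =>
          if (σ * σ * σ) j = i then e (σ (σ j)) * e (σ j) * e j else 0 := by
        have h32 : M ^ 3 = M ^ 2 * M := by rw [← pow_succ]
        rw [h32, hM2, hMof, pmul]
      have hσ3 : σ * σ * σ = 1 := by
        rcases h with rfl | rfl <;> decide
      have hval : ∀ j : Fin 3, e (σ (σ j)) * e (σ j) * e j
          = e (σ (σ 0)) * e (σ 0) * e 0 := by
        rcases h with rfl | rfl
        · have h0 : (finRotate 3) (0 : Fin 3) = 1 := by decide
          have h1 : (finRotate 3) (1 : Fin 3) = 2 := by decide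
          have h2 : (finRotate 3) (2 : Fin 3) = 0 := by decide
          intro j
          rcases (by decide : ∀ jj : Fin 3, jj = 0 ∨ jj = 1 ∨ jj = 2) j with rfl | rfl | rfl <;>
            simp only [h0, h1, h2] <;> ring
        · have h0 : ((finRotate 3)⁻¹ : Equiv.Perm (Fin 3)) (0 : Fin 3) = 2 := by decide
          have h1 : ((finRotate 3)⁻¹ : Equiv.Perm (Fin 3)) (1 : Fin 3) = 0 := by decide
          have h2 : ((finRotate 3)⁻¹ : Equiv.Perm (Fin 3)) (2 : Fin 3) = 1 := by decide
          intro j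
          rcases (by decide : ∀ jj : Fin 3, jj = 0 ∨ jj = 1 ∨ jj = 2) j with rfl | rfl | rfl <;>
            simp only [h0, h1, h2] <;> ring
      refine ⟨e (σ (σ 0)) * e (σ 0) * e 0,
        mul_ne_zero (mul_ne_zero (he0 _) (he0 _)) (he0 0), ?_⟩
      rw [hM3, hσ3]
      ext i j
      simp only [Matrix.of_apply, Equiv.Perm.one_apply, Matrix.smul_apply, Matrix.one_apply,
        smul_eq_mul]
      rcases eq_or_ne j i with h' | h'
      · rw [if_pos h'.symm, mul_one, ← hval j]; exact if_pos h'
      · rw [if_neg (Ne.symm h'), mul_zero]; exact if_neg h'
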